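/- Let k ≥ 3 be an integer. Then for all n ≥ k, |S_n(R^k_{k−1,k−1})| = (k−2)!·(F_{n−k+4} + (k−3)·F_{n−k+2}), where F_m denotes the m-th Fibonacci number. -/

import Mathlib

/-- `π` contains `σ` as a pattern: there is a subsequence of `π` (in one-line notation)
whose entries are in the same relative order as those of `σ`. -/
def PContains {n k : ℕ} (π : Equiv.Perm (Fin n)) (σ : Equiv.Perm (Fin k)) : Prop :=
  ∃ f : Fin k → Fin n, StrictMono f ∧ ∀ s t : Fin k, π (f s) < π (f t) ↔ σ s < σ t

/-- `π` avoids the pattern `σ`. -/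
def PAvoids {n k : ℕ} (π : Equiv.Perm (Fin n)) (σ : Equiv.Perm (Fin k)) : Prop :=
  ¬ PContains π σ

open Equiv in

/-- explicit structural condition -/
def Pc (k n : ℕ) (π : Equiv.Perm (Fin n)) : Prop :=
  ∀ i j : Fin n, (i : ℕ) + k ≤ n → (i : ℕ) + 2 ≤ (j : ℕ) → π j < π i

private theorem eG_key {n : ℕ} (q : Fin (n+1)) (π : Equiv.Perm (Fin (n+1))) (h : π 0 = q)
    (i : Fin n) {j : Fin n} (hj : q.succAbove j = π i.succ) :
    ((finSuccEquiv n).symm.trans (π.trans (finSuccEquiv' q))) (some i) = some j := by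
  simp only [Equiv.trans_apply, finSuccEquiv_symm_some, ← hj, finSuccEquiv'_succAbove]

private theorem pine {n : ℕ} (q : Fin (n+1)) (π : Equiv.Perm (Fin (n+1))) (h : π 0 = q)
    (i : Fin n) : π i.succ ≠ q := by
  rw [← h]; intro hh; exact absurd (π.injective hh) (Fin.succ_ne_zero i)

/-- remove position 0 / value q -/
def eG {n : ℕ} (q : Fin (n+1)) : {π : Equiv.Perm (Fin (n+1)) // π 0 = q} ≃ Equiv.Perm (Fin n) where
  toFun π := Equiv.removeNone
    ((finSuccEquiv n).symm.trans ((π : Equiv.Perm (Fin (n+1))).trans (finSuccEquiv' q)))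
  invFun σ := ⟨(finSuccEquiv n).trans ((σ.optionCongr).trans (finSuccEquiv' q).symm), by
    simp⟩
  left_inv := by
    rintro ⟨π, h⟩
    apply Subtype.ext
    apply Equiv.ext
    intro x
    induction x using Fin.cases with
    | zero => simp [h]
    | succ i =>
        obtain ⟨j, hj⟩ := Fin.exists_succAbove_eq (pine q π h i)
        have h2 := Equiv.removeNone_some _ ⟨_, eG_key q π h i hj⟩
        rw [eG_key q π h i hj] at h2
        have h3 := Option.some_injective _ h2
        show (finSuccEquiv' q).symm ((Equiv.optionCongr
            (Equiv.removeNone ((finSuccEquiv n).symm.trans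
              (π.trans (finSuccEquiv' q))))) (finSuccEquiv n i.succ)) = π i.succ
        rw [finSuccEquiv_succ]
        simp only [Equiv.optionCongr_apply, Option.map_some, h3]
        rw [finSuccEquiv'_symm_some, hj]
  right_inv := by
    intro σ
    apply Equiv.ext
    intro i
    have key : ((finSuccEquiv n).symm.trans
        ((((finSuccEquiv n).trans ((σ.optionCongr).trans (finSuccEquiv' q).symm)) :
          Equiv.Perm (Fin (n+1))).trans (finSuccEquiv' q))) (some i) = some (σ i) := by
      simp only [Equiv.trans_apply, finSuccEquiv_symm_some, finSuccEquiv_succ,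
        Equiv.optionCongr_apply, Option.map_some, finSuccEquiv'_symm_some,
        finSuccEquiv'_succAbove]
    have h2 := Equiv.removeNone_some _ ⟨_, key⟩
    rw [key] at h2
    exact Option.some_injective _ h2

theorem eG_apply {n : ℕ} (q : Fin (n+1)) (π : Equiv.Perm (Fin (n+1))) (h : π 0 = q) (i : Fin n) :
    q.succAbove ((eG q ⟨π, h⟩ : Equiv.Perm (Fin n)) i) = π i.succ := by
  obtain ⟨j, hj⟩ := Fin.exists_succAbove_eq (pine q π h i)
  have h2 := Equiv.removeNone_some _ ⟨_, eG_key q π h i hj⟩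
  rw [eG_key q π h i hj] at h2
  have h3 : (eG q ⟨π, h⟩ : Equiv.Perm (Fin n)) i = j := Option.some_injective _ h2
  rw [h3, hj]

/-- transfer of the structural condition through removal of position 0 / value last -/
theorem lemA {k n : ℕ} (π : Equiv.Perm (Fin (n+1))) (h : π 0 = Fin.last n) :
    Pc k (n+1) π ↔ Pc k n (eG (Fin.last n) ⟨π, h⟩) := by
  set σ := (eG (Fin.last n) ⟨π, h⟩ : Equiv.Perm (Fin n)) with hσ
  have spec : ∀ i : Fin n, (σ i).castSucc = π i.succ := by
    intro i
    rw [← Fin.succAbove_last]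
    exact eG_apply _ π h i
  constructor
  · intro hP i j h1 h2
    have := hP i.succ j.succ (by simp [Fin.val_succ]; omega) (by simp [Fin.val_succ]; omega)
    rw [← spec i, ← spec j] at this
    exact Fin.castSucc_lt_castSucc_iff.mp this
  · intro hσ2 i j h1 h2
    induction i using Fin.cases with
    | zero =>
        have hne : π j ≠ π 0 := by
          intro e
          have := π.injective e
          simp only [Fin.ext_iff] at this
          omega
        rw [h]
        exact lt_of_le_of_ne (Fin.le_last _) (fun e => hne (by rw [e, h]))
    | succ i' =>
        induction j using Fin.cases with
        | zero => simp [Fin.val_succ] at h2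
        | succ j' =>
            rw [← spec i', ← spec j']
            apply Fin.castSucc_lt_castSucc_iff.mpr
            apply hσ2 i' j'
            · simp [Fin.val_succ] at h1; omega
            · simp [Fin.val_succ] at h2; omega

/-- transfer through removal of position 0 / value n (second largest), assuming π 1 = last -/
theorem lemB {k n : ℕ} (π : Equiv.Perm (Fin (n+2))) (h : π 0 = (Fin.last n).castSucc)
    (h1 : π 1 = Fin.last (n+1)) :
    Pc k (n+2) π ↔ Pc k (n+1) (eG ((Fin.last n).castSucc) ⟨π, h⟩) := by
  set q : Fin (n+2) := (Fin.last n).castSucc with hq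
  set σ := (eG q ⟨π, h⟩ : Equiv.Perm (Fin (n+1))) with hσ
  have spec : ∀ i : Fin (n+1), q.succAbove (σ i) = π i.succ := fun i => eG_apply q π h i
  constructor
  · intro hP i j hh1 hh2
    have := hP i.succ j.succ (by simp [Fin.val_succ]; omega) (by simp [Fin.val_succ]; omega)
    rw [← spec i, ← spec j] at this
    exact Fin.succAbove_lt_succAbove_iff.mp this
  · intro hσ2 i j hh1 hh2
    induction i using Fin.cases with
    | zero =>
        rw [h]
        have hne0 : π j ≠ π 0 := fun e => by
          have := π.injective e; simp only [Fin.ext_iff] at this; omega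
        have hne1 : π j ≠ π 1 := fun e => by
          have := π.injective e; simp only [Fin.ext_iff] at this
          simp only [Fin.val_one] at this; omega
        have hlt : (π j : ℕ) < n + 1 := by
          rcases Nat.lt_or_ge (π j : ℕ) (n+1) with hc | hc
          · exact hc
          · exfalso
            have hle : (π j : ℕ) ≤ n + 1 := Nat.lt_succ_iff.mp (π j).isLt
            have : (π j : ℕ) = n + 1 := le_antisymm hle hc
            exact hne1 (by rw [h1]; exact Fin.ext (by simp [this]))
        have hv : (π j : ℕ) ≠ n := fun e =>
          hne0 (by rw [h]; exact Fin.ext (by simp [e, hq]))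
        show (π j : ℕ) < n
        omega
    | succ i' =>
        induction j using Fin.cases with
        | zero => simp [Fin.val_succ] at hh2
        | succ j' =>
            rw [← spec i', ← spec j']
            apply Fin.succAbove_lt_succAbove_iff.mpr
            apply hσ2 i' j'
            · simp [Fin.val_succ] at hh1; omega
            · simp [Fin.val_succ] at hh2; omega

/-- forcing: if position 0 is constrained and doesn't hold the max, then it holds the
second max and position 1 holds the max -/
theorem forcing {k n : ℕ} (hk : k ≤ n + 2) (π : Equiv.Perm (Fin (n+2)))
    (hP : Pc k (n+2) π) (h0 : π 0 ≠ Fin.last (n+1)) :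
    π 0 = (Fin.last n).castSucc ∧ π 1 = Fin.last (n+1) := by
  have hcon : ∀ j : Fin (n+2), 2 ≤ (j : ℕ) → π j < π 0 := by
    intro j hj
    exact hP 0 j (by simpa using hk) (by simpa using hj)
  have h1 : π 1 = Fin.last (n+1) := by
    set x := π.symm (Fin.last (n+1)) with hx
    have hπx : π x = Fin.last (n+1) := π.apply_symm_apply _
    have hx0 : x ≠ 0 := fun e => h0 (by rw [← e]; exact hπx)
    rcases Nat.lt_or_ge (x : ℕ) 2 with hc | hc
    · have : (x : ℕ) = 1 := by
        have := Fin.val_ne_of_ne hx0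
        simp only [Fin.val_zero] at this
        omega
      have : x = 1 := Fin.ext (by simpa using this)
      rw [← this]; exact hπx
    · exfalso
      have := hcon x hc
      rw [hπx] at this
      exact absurd (Fin.le_last (π 0)) (not_le.mpr this)
  refine ⟨?_, h1⟩
  set y := π.symm ((Fin.last n).castSucc) with hy
  have hπy : π y = (Fin.last n).castSucc := π.apply_symm_apply _
  have hy1 : y ≠ 1 := by
    intro e
    rw [e, h1] at hπy
    exact absurd (congrArg Fin.val hπy) (by simp)
  rcases Nat.lt_or_ge (y : ℕ) 2 with hc | hc
  · have hyv : (y : ℕ) = 0 := by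
      have := Fin.val_ne_of_ne hy1
      simp only [Fin.val_one] at this
      omega
    have : y = 0 := Fin.ext (by simpa using hyv)
    rw [← this]; exact hπy
  · exfalso
    have hlt := hcon y hc
    rw [hπy] at hlt
    have hv0 : (π 0 : ℕ) < n + 1 := by
      have := Fin.val_ne_of_ne h0
      simp only [Fin.val_last] at this
      have := (π 0).isLt
      omega
    have : (n : ℕ) < (π 0 : ℕ) := Fin.lt_def.mp hlt
    omega

/-- the two key cardinality facts -/
theorem card_split (k n : ℕ) :
    Nat.card {π : Equiv.Perm (Fin (n+2)) // Pc k (n+2) π} =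
      Nat.card {π : Equiv.Perm (Fin (n+2)) // Pc k (n+2) π ∧ π 0 = Fin.last (n+1)} +
      Nat.card {π : Equiv.Perm (Fin (n+2)) // Pc k (n+2) π ∧ π 0 ≠ Fin.last (n+1)} := by
  classical
  rw [← Nat.card_sum]
  apply Nat.card_congr
  refine Equiv.trans (Equiv.sumCompl (fun π : {π : Equiv.Perm (Fin (n+2)) // Pc k (n+2) π} =>
    (π : Equiv.Perm (Fin (n+2))) 0 = Fin.last (n+1))).symm ?_
  refine Equiv.sumCongr ?_ ?_
  · exact Equiv.subtypeSubtypeEquivSubtypeInter (Pc k (n+2))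
      (fun π => π 0 = Fin.last (n+1))
  · exact Equiv.subtypeSubtypeEquivSubtypeInter (Pc k (n+2))
      (fun π => π 0 ≠ Fin.last (n+1))

/-- first-case equivalence -/
def eA (k n : ℕ) :
    {π : Equiv.Perm (Fin (n+1)) // Pc k (n+1) π ∧ π 0 = Fin.last n} ≃
      {σ : Equiv.Perm (Fin n) // Pc k n σ} := by
  refine Equiv.trans (Equiv.subtypeEquivRight (fun π => and_comm)) ?_
  refine Equiv.trans (Equiv.subtypeSubtypeEquivSubtypeInter
    (fun π : Equiv.Perm (Fin (n+1)) => π 0 = Fin.last n) (Pc k (n+1))).symm ?_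
  exact (eG (Fin.last n)).subtypeEquiv (fun π => by
    obtain ⟨π, h⟩ := π
    exact lemA π h)

/-- second-case equivalence -/
def eB (k n : ℕ) (hk : k ≤ n + 2) :
    {π : Equiv.Perm (Fin (n+2)) // Pc k (n+2) π ∧ π 0 ≠ Fin.last (n+1)} ≃
      {τ : Equiv.Perm (Fin n) // Pc k n τ} := by
  have hqlast : ((Fin.last n).castSucc : Fin (n+2)).succAbove (Fin.last n) = Fin.last (n+1) := by
    rw [Fin.succAbove_of_le_castSucc _ _ le_rfl, Fin.succ_last]
  refine Equiv.trans (Equiv.subtypeEquivRight (q := fun π : Equiv.Perm (Fin (n+2)) =>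
      (π 0 = (Fin.last n).castSucc) ∧ (Pc k (n+2) π ∧ π 1 = Fin.last (n+1))) ?_) ?_
  · intro π
    constructor
    · rintro ⟨hp, h0⟩
      obtain ⟨ha, hb⟩ := forcing hk π hp h0
      exact ⟨ha, hp, hb⟩
    · rintro ⟨h0, hp, _⟩
      refine ⟨hp, ?_⟩
      rw [h0]
      intro e
      exact absurd (congrArg Fin.val e) (by simp)
  refine Equiv.trans (Equiv.subtypeSubtypeEquivSubtypeInter
    (fun π : Equiv.Perm (Fin (n+2)) => π 0 = (Fin.last n).castSucc)
    (fun π => Pc k (n+2) π ∧ π 1 = Fin.last (n+1))).symm ?_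
  refine Equiv.trans ((eG ((Fin.last n).castSucc)).subtypeEquiv (fun π => ?_)) (eA k n)
  obtain ⟨π, h⟩ := π
  have spec : ∀ i : Fin (n+1),
      ((Fin.last n).castSucc : Fin (n+2)).succAbove
        ((eG ((Fin.last n).castSucc) ⟨π, h⟩ : Equiv.Perm (Fin (n+1))) i) = π i.succ :=
    fun i => eG_apply _ π h i
  constructor
  · rintro ⟨hp, h1⟩
    refine ⟨(lemB π h h1).mp hp, ?_⟩
    apply Fin.succAbove_right_injective (p := ((Fin.last n).castSucc : Fin (n+2)))
    rw [spec 0, hqlast]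
    exact h1
  · rintro ⟨hp, h0⟩
    have h1 : π 1 = Fin.last (n+1) := by
      have := spec 0
      rw [h0, hqlast] at this
      exact this.symm
    exact ⟨(lemB π h h1).mpr hp, h1⟩

theorem card_low {k n : ℕ} (h : n < k) :
    Nat.card {π : Equiv.Perm (Fin n) // Pc k n π} = n.factorial := by
  have : ∀ π : Equiv.Perm (Fin n), Pc k n π := by
    intro π i j h1 h2
    exact absurd h1 (by omega)
  rw [Nat.card_congr (Equiv.subtypeUnivEquiv this)]
  rw [Nat.card_eq_fintype_card, Fintype.card_perm, Fintype.card_fin]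

theorem card_rec (k n : ℕ) (hk : k ≤ n + 2) :
    Nat.card {π : Equiv.Perm (Fin (n+2)) // Pc k (n+2) π} =
      Nat.card {π : Equiv.Perm (Fin (n+1)) // Pc k (n+1) π} +
      Nat.card {π : Equiv.Perm (Fin n) // Pc k n π} := by
  rw [card_split]
  congr 1
  · exact Nat.card_congr (eA k (n+1))
  · exact Nat.card_congr (eB k n hk)

theorem count_formula (k : ℕ) (hk : 3 ≤ k) : ∀ n : ℕ, k ≤ n →
    Nat.card {π : Equiv.Perm (Fin n) // Pc k n π} =
      Nat.factorial (k - 2) * (Nat.fib (n - k + 4) + (k - 3) * Nat.fib (n - k + 2)) := by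
  intro n
  induction n using Nat.strong_induction_on with
  | _ n ih =>
  intro hn
  obtain ⟨m, rfl⟩ : ∃ m, n = m + 2 := ⟨n - 2, by omega⟩
  rw [card_rec k m hn]
  rcases Nat.lt_or_ge m k with hm | hm
  · rcases Nat.lt_or_ge (m + 1) k with hm1 | hm1
    · -- n = k, i.e. k = m + 2
      have hkm : k = m + 2 := by omega
      subst hkm
      rw [card_low hm, card_low hm1]
      have h4 : m + 2 - (m + 2) + 4 = 4 := by omega
      have h2 : m + 2 - (m + 2) + 2 = 2 := by omega
      rw [h4, h2]
      have hf4 : Nat.fib 4 = 3 := by decide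
      have hf2 : Nat.fib 2 = 1 := by decide
      rw [hf4, hf2]
      have hk2 : m + 2 - 2 = m := by omega
      rw [hk2, Nat.factorial_succ]
      have : 3 + (m + 2 - 3) * 1 = m + 2 := by omega
      rw [this]
      ring
    · -- n = k + 1, i.e. k = m + 1
      have hkm : k = m + 1 := by omega
      subst hkm
      rw [card_low hm, ih (m+1) (by omega) le_rfl]
      have e1 : m + 1 - (m + 1) + 4 = 4 := by omega
      have e2 : m + 1 - (m + 1) + 2 = 2 := by omega
      have e3 : m + 2 - (m + 1) + 4 = 5 := by omega
      have e4 : m + 2 - (m + 1) + 2 = 3 := by omega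
      rw [e1, e2, e3, e4]
      have hf4 : Nat.fib 4 = 3 := by decide
      have hf2 : Nat.fib 2 = 1 := by decide
      have hf5 : Nat.fib 5 = 5 := by decide
      have hf3 : Nat.fib 3 = 2 := by decide
      rw [hf4, hf2, hf5, hf3]
      obtain ⟨m', rfl⟩ : ∃ m', m = m' + 2 := ⟨m - 2, by omega⟩
      have hk2 : m' + 2 + 1 - 2 = m' + 1 := by omega
      rw [hk2]
      have hfac : (m' + 2).factorial = (m' + 2) * (m' + 1).factorial := Nat.factorial_succ _
      rw [hfac]
      have g1 : 3 + (m' + 2 + 1 - 3) * 1 = m' + 3 := by omega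
      have g2 : 5 + (m' + 2 + 1 - 3) * 2 = 2 * m' + 5 := by omega
      rw [g1, g2]
      ring_nf
  · -- both m, m+1 ≥ k
    rw [ih (m+1) (by omega) (by omega), ih m (by omega) hm]
    have e1 : m + 1 - k + 4 = (m - k) + 5 := by omega
    have e2 : m + 1 - k + 2 = (m - k) + 3 := by omega
    have e3 : m - k + 4 = (m - k) + 4 := by omega
    have e5 : m + 2 - k + 4 = (m - k) + 6 := by omega
    have e6 : m + 2 - k + 2 = (m - k) + 4 := by omega
    rw [e1, e2, e5, e6]
    set a := m - k
    have f1 : Nat.fib (a + 6) = Nat.fib (a + 4) + Nat.fib (a + 5) := by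
      rw [show a + 6 = (a + 4) + 2 by ring]; exact Nat.fib_add_two
    have f2 : Nat.fib (a + 4) = Nat.fib (a + 2) + Nat.fib (a + 3) := by
      rw [show a + 4 = (a + 2) + 2 by ring]; exact Nat.fib_add_two
    rw [f1, f2]
    ring

theorem pc_avoids {k n : ℕ} (hk : 3 ≤ k) (π : Equiv.Perm (Fin n)) (hP : Pc k n π)
    (σ : Equiv.Perm (Fin k))
    (hcond : ((σ ⟨0, by omega⟩ : ℕ) + 1 = k - 1 ∧ (σ ⟨1, by omega⟩ : ℕ) + 1 = k - 1) ∨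
      (σ ⟨0, by omega⟩ : ℕ) + 1 < k - 1 ∨
      ((σ ⟨0, by omega⟩ : ℕ) + 1 = k - 1 ∧ (σ ⟨1, by omega⟩ : ℕ) + 1 < k - 1)) :
    PAvoids π σ := by
  rintro ⟨f, hmono, hiff⟩
  set z : Fin k := ⟨0, by omega⟩ with hz
  set o : Fin k := ⟨1, by omega⟩ with ho
  -- step bound for strictly monotone f
  have hstep : ∀ (jj : ℕ) (hj : jj < k), (f z : ℕ) + jj ≤ (f ⟨jj, hj⟩ : ℕ) := by
    intro jj
    induction jj with
    | zero => intro hj; simp [hz]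
    | succ m ihm =>
        intro hj
        have h1 := ihm (by omega)
        have h2 : f ⟨m, by omega⟩ < f ⟨m + 1, hj⟩ := hmono (by simp [Fin.lt_def])
        have h3 : (f ⟨m, by omega⟩ : ℕ) < (f ⟨m + 1, hj⟩ : ℕ) := h2
        omega
  have ha : (f z : ℕ) + k ≤ n := by
    have h1 := hstep (k - 1) (by omega)
    have h2 := (f ⟨k - 1, by omega⟩).isLt
    omega
  -- find t with val ≥ 2 and σ z < σ t
  have hmain : ∀ t : Fin k, 2 ≤ (t : ℕ) → σ z < σ t → False := by
    intro t ht2 hσ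
    have hb : (f z : ℕ) + 2 ≤ (f t : ℕ) := by
      have h1 := hstep (t : ℕ) t.isLt
      have : (⟨(t : ℕ), t.isLt⟩ : Fin k) = t := rfl
      rw [this] at h1
      omega
    have hlt1 : π (f t) < π (f z) := hP (f z) (f t) ha hb
    have hlt2 : π (f z) < π (f t) := (hiff z t).mpr hσ
    exact absurd hlt1 (lt_asymm hlt2)
  rcases hcond with ⟨h0, h1⟩ | h0 | ⟨h0, h1⟩
  · -- impossible: σ z = σ o
    have : σ z = σ o := Fin.ext (by omega)
    have := σ.injective this
    exact absurd (congrArg Fin.val this) (by simp [hz, ho])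
  · -- σ z rank ≤ k - 3
    set t1 := σ.symm ⟨k - 1, by omega⟩ with ht1
    set t2 := σ.symm ⟨k - 2, by omega⟩ with ht2
    have hv1 : (σ t1 : ℕ) = k - 1 := by rw [ht1, Equiv.apply_symm_apply]
    have hv2 : (σ t2 : ℕ) = k - 2 := by rw [ht2, Equiv.apply_symm_apply]
    have h0' : (σ z : ℕ) + 1 < k - 1 := h0
    rcases Nat.lt_or_ge (t1 : ℕ) 2 with hc | hc
    · -- t1 is ⟨1⟩ (can't be ⟨0⟩), use t2
      have hne0 : (t1 : ℕ) ≠ 0 := by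
        intro e
        have : t1 = z := Fin.ext (by simp [hz, e])
        rw [this] at hv1
        omega
      have ht1o : t1 = o := Fin.ext (by simp [ho]; omega)
      have hne0' : (t2 : ℕ) ≠ 0 := by
        intro e
        have : t2 = z := Fin.ext (by simp [hz, e])
        rw [this] at hv2
        omega
      have hne1' : (t2 : ℕ) ≠ 1 := by
        intro e
        have : t2 = t1 := by
          rw [ht1o]; exact Fin.ext (by simp [ho, e])
        rw [this] at hv2
        omega
      apply hmain t2 (by omega)
      rw [Fin.lt_def]
      omega
    · apply hmain t1 hc
      rw [Fin.lt_def]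
      omega
  · -- σ z = k - 2, σ o < k - 2 : use preimage of max
    set t1 := σ.symm ⟨k - 1, by omega⟩ with ht1
    have hv1 : (σ t1 : ℕ) = k - 1 := by rw [ht1, Equiv.apply_symm_apply]
    have hne0 : (t1 : ℕ) ≠ 0 := by
      intro e
      have : t1 = z := Fin.ext (by simp [hz, e])
      rw [this] at hv1
      omega
    have hne1 : (t1 : ℕ) ≠ 1 := by
      intro e
      have : t1 = o := Fin.ext (by simp [ho, e])
      rw [this] at hv1
      omega
    apply hmain t1 (by omega)
    rw [Fin.lt_def]
    omega

theorem avoids_pc {k n : ℕ} (hk : 3 ≤ k) (hn : k ≤ n) (π : Equiv.Perm (Fin n))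
    (hA : ∀ σ : Equiv.Perm (Fin k),
      (((σ ⟨0, by omega⟩ : ℕ) + 1 = k - 1 ∧ (σ ⟨1, by omega⟩ : ℕ) + 1 = k - 1) ∨
        (σ ⟨0, by omega⟩ : ℕ) + 1 < k - 1 ∨
        ((σ ⟨0, by omega⟩ : ℕ) + 1 = k - 1 ∧ (σ ⟨1, by omega⟩ : ℕ) + 1 < k - 1)) →
      PAvoids π σ) :
    Pc k n π := by
  intro i j hik hij2
  by_contra hcon
  -- π i < π j
  have hij : π i < π j := by
    rcases lt_or_ge (π j) (π i) with h | h
    · exact absurd h hcon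
    · refine lt_of_le_of_ne h ?_
      intro e
      have := π.injective e
      rw [this] at hij2
      omega
  -- build the k-element position set
  have hi1 : (i : ℕ) + 1 < n := by omega
  have hi2 : (i : ℕ) + 2 < n := by omega
  set i1 : Fin n := ⟨(i : ℕ) + 1, hi1⟩ with hi1d
  set a : Fin n := ⟨(i : ℕ) + 2, hi2⟩ with had
  have hjIci : j ∈ Finset.Ici a := by
    rw [Finset.mem_Ici]
    exact hij2
  have hcardIci : k - 2 ≤ (Finset.Ici a).card := by
    rw [Fin.card_Ici]
    simp only [had]
    omega
  obtain ⟨s, hjs, hsub, hcard⟩ := Finset.exists_subsuperset_card_eq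
    (Finset.singleton_subset_iff.mpr hjIci) (by simp; omega) hcardIci
  have hjmem : j ∈ s := hjs (Finset.mem_singleton_self j)
  have hs_lb : ∀ x ∈ s, (i : ℕ) + 2 ≤ (x : ℕ) := by
    intro x hx
    have := hsub hx
    rw [Finset.mem_Ici] at this
    exact this
  have hi1ns : i1 ∉ s := fun h => by have := hs_lb i1 h; simp [hi1d] at this
  have hins : i ∉ Insert.insert i1 s := by
    intro h
    rcases Finset.mem_insert.mp h with h | h
    · exact absurd (congrArg Fin.val h) (by simp [hi1d])
    · have := hs_lb i h; omega
  set S : Finset (Fin n) := Insert.insert i (Insert.insert i1 s) with hS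
  have hScard : S.card = k := by
    rw [hS, Finset.card_insert_of_notMem hins, Finset.card_insert_of_notMem hi1ns, hcard]
    omega
  -- the position map
  set F := S.orderIsoOfFin hScard with hF
  set f : Fin k → Fin n := fun t => (F t : Fin n) with hf
  have hfmono : StrictMono f := fun sx t h => by
    simp only [hf]
    exact F.strictMono h
  have hfmem : ∀ t, f t ∈ S := fun t => (F t).2
  have hfsurj : ∀ x ∈ S, ∃ t, f t = x := by
    intro x hx
    obtain ⟨t, ht⟩ := F.surjective ⟨x, hx⟩
    exact ⟨t, by rw [hf]; simp [ht]⟩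
  have hS_lb : ∀ x ∈ S, i ≤ x := by
    intro x hx
    rcases Finset.mem_insert.mp hx with h | h
    · exact le_of_eq h.symm
    · rcases Finset.mem_insert.mp h with h | h
      · rw [h]; exact le_of_lt (by rw [Fin.lt_def]; simp [hi1d])
      · have := hs_lb x h
        rw [Fin.le_def]
        omega
  set z : Fin k := ⟨0, by omega⟩ with hz
  -- f z = i
  have hfz : f z = i := by
    obtain ⟨t, ht⟩ := hfsurj i (Finset.mem_insert_self _ _)
    have h1 : f z ≤ f t := hfmono.monotone (show z ≤ t by
      rw [Fin.le_def]; simp [hz])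
    rw [ht] at h1
    exact le_antisymm h1 (hS_lb _ (hfmem z))
  -- the index of j is ≥ 2
  obtain ⟨tj, htj⟩ := hfsurj j (by
    rw [hS]
    exact Finset.mem_insert_of_mem (Finset.mem_insert_of_mem hjmem))
  have htj2 : 2 ≤ (tj : ℕ) := by
    by_contra hc
    push_neg at hc
    interval_cases h : (tj : ℕ)
    · have : tj = z := Fin.ext (by rw [hz]; exact h)
      rw [this, hfz] at htj
      rw [← htj] at hij2
      omega
    · -- tj = 1 : but i1 ∈ S has index ≥ 1 and value < j
      obtain ⟨t1, ht1⟩ := hfsurj i1 (Finset.mem_insert_of_mem (Finset.mem_insert_self _ _))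
      have ht1ne : t1 ≠ z := by
        intro e
        rw [e, hfz] at ht1
        exact absurd (congrArg Fin.val ht1) (by simp [hi1d])
      have ht1ge : (1 : ℕ) ≤ (t1 : ℕ) := by
        rcases Nat.eq_zero_or_pos (t1 : ℕ) with h0 | h0
        · exact absurd (Fin.ext (by rw [hz]; exact h0)) ht1ne
        · exact h0
      have : f tj ≤ f t1 := by
        rcases eq_or_lt_of_le (show tj ≤ t1 from by rw [Fin.le_def]; omega) with e | e
        · rw [e]
        · exact le_of_lt (hfmono e)
      rw [htj, ht1] at this
      rw [Fin.le_def] at this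
      simp [hi1d] at this
      omega
  -- build the pattern σ
  have hginj : Function.Injective (fun t => π (f t)) :=
    fun sx t h => hfmono.injective (π.injective h)
  set V : Finset (Fin n) := Finset.image (fun t => π (f t)) Finset.univ with hV
  have hVcard : V.card = k := by
    rw [hV, Finset.card_image_of_injective _ hginj, Finset.card_univ, Fintype.card_fin]
  set W := V.orderIsoOfFin hVcard with hW
  set σ0 : Fin k → Fin k := fun t => W.symm ⟨π (f t), by
    rw [hV]; exact Finset.mem_image_of_mem _ (Finset.mem_univ t)⟩ with hσ0
  have hσ0inj : Function.Injective σ0 := by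
    intro sx t h
    rw [hσ0] at h
    have := W.symm.injective h
    exact hginj (congrArg Subtype.val this)
  have hσ0bij : Function.Bijective σ0 := Finite.injective_iff_bijective.mp hσ0inj
  set σ : Equiv.Perm (Fin k) := Equiv.ofBijective σ0 hσ0bij with hσd
  have hσap : ∀ t, σ t = σ0 t := fun t => rfl
  have hordiff : ∀ sx t : Fin k, π (f sx) < π (f t) ↔ σ sx < σ t := by
    intro sx t
    rw [hσap, hσap, hσ0]
    simp only [W.symm.lt_iff_lt, Subtype.mk_lt_mk]
  -- σ is contained in π
  have hcontains : PContains π σ := ⟨f, hfmono, hordiff⟩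
  -- σ satisfies the R-condition
  apply hA σ ?_ hcontains
  -- key order facts
  have hzj : σ z < σ tj := by
    rw [← hordiff, hfz, htj]
    exact hij
  have hzval : (σ z : ℕ) ≤ k - 2 := by
    have h1 := hzj
    rw [Fin.lt_def] at h1
    have := (σ tj).isLt
    omega
  rcases Nat.lt_or_ge (σ z : ℕ) (k - 2) with hc | hc
  · right; left
    omega
  · -- σ z = k - 2; show σ ⟨1⟩ < k - 2
    have hzeq : (σ z : ℕ) = k - 2 := by omega
    have htjval : (σ tj : ℕ) = k - 1 := by
      have h1 := hzj
      rw [Fin.lt_def] at h1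
      have := (σ tj).isLt
      omega
    set o : Fin k := ⟨1, by omega⟩ with ho
    have honetj : o ≠ tj := by
      intro e
      rw [e] at ho
      have := congrArg Fin.val ho
      simp at this
      omega
    have hoval : (σ o : ℕ) < k - 2 := by
      have hne1 : σ o ≠ σ tj := fun e => honetj (σ.injective e)
      have hne2 : σ o ≠ σ z := fun e => by
        have := σ.injective e
        exact absurd (congrArg Fin.val this) (by simp [ho, hz])
      have h1 : (σ o : ℕ) ≠ k - 1 := fun e => hne1 (Fin.ext (by omega))
      have h2 : (σ o : ℕ) ≠ k - 2 := fun e => hne2 (Fin.ext (by omega))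
      have := (σ o).isLt
      omega
    right; right
    constructor <;> omega

/-- Let `k ≥ 3`.  The set `R^k_{k-1,k-1}` consists of the permutations `σ` of `{1,…,k}`
such that `σ(1) = σ(2) = k-1` (impossible), or `σ(1) < k-1`, or `σ(1) = k-1` and
`σ(2) < k-1` (positions zero-indexed below, one-line values given via `σ i + 1`).
For all `n ≥ k`,
`|S_n(R^k_{k-1,k-1})| = (k-2)! ⬝ (F_{n-k+4} + (k-3) F_{n-k+2})`. -/
theorem statement19 (k : ℕ) (hk : 3 ≤ k) (n : ℕ) (hn : k ≤ n) :
    Nat.card {π : Equiv.Perm (Fin n) //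
        ∀ σ : Equiv.Perm (Fin k),
          (((σ ⟨0, by omega⟩ : ℕ) + 1 = k - 1 ∧ (σ ⟨1, by omega⟩ : ℕ) + 1 = k - 1) ∨
            (σ ⟨0, by omega⟩ : ℕ) + 1 < k - 1 ∨
            ((σ ⟨0, by omega⟩ : ℕ) + 1 = k - 1 ∧ (σ ⟨1, by omega⟩ : ℕ) + 1 < k - 1)) →
          PAvoids π σ} =
      Nat.factorial (k - 2) * (Nat.fib (n - k + 4) + (k - 3) * Nat.fib (n - k + 2)) := by
  have heq : ∀ π : Equiv.Perm (Fin n),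
      (∀ σ : Equiv.Perm (Fin k),
        (((σ ⟨0, by omega⟩ : ℕ) + 1 = k - 1 ∧ (σ ⟨1, by omega⟩ : ℕ) + 1 = k - 1) ∨
          (σ ⟨0, by omega⟩ : ℕ) + 1 < k - 1 ∨
          ((σ ⟨0, by omega⟩ : ℕ) + 1 = k - 1 ∧ (σ ⟨1, by omega⟩ : ℕ) + 1 < k - 1)) →
        PAvoids π σ) ↔ Pc k n π :=
    fun π => ⟨fun h => avoids_pc hk hn π h, fun h σ hσ => pc_avoids hk π h σ hσ⟩
  rw [Nat.card_congr (Equiv.subtypeEquivRight heq)]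
  exact count_formula k hk n hn
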